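/- Let G be a finite connected simple graph with at least two vertices, and let G' be the graph obtained from G by adding a single new edge between two distinct non-adjacent vertices of G. Then ml(G') ≤ ml(G) + 2. -/

import Mathlib

open SimpleGraph

variable {V : Type*}

/-- The number of leaves (degree-1 vertices) of a graph. -/
noncomputable def numLeaves (T : SimpleGraph V) : ℕ :=
  {v | (T.neighborSet v).ncard = 1}.ncard

/-- The max-leaf number of `G`: the maximum number of leaves over all spanning trees of `G`
(a spanning tree is a subgraph of `G` on the full vertex set that is a tree). -/
noncomputable def ml (G : SimpleGraph V) : ℕ :=
  sSup {n | ∃ T : SimpleGraph V, T ≤ G ∧ T.IsTree ∧ n = numLeaves T}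

private lemma numLeaves_le_card [Fintype V] (T : SimpleGraph V) :
    numLeaves T ≤ Fintype.card V := by
  unfold numLeaves
  calc {v | (T.neighborSet v).ncard = 1}.ncard
      ≤ (Set.univ : Set V).ncard := Set.ncard_le_ncard (Set.subset_univ _) Set.finite_univ
    _ = Fintype.card V := by rw [Set.ncard_univ, Nat.card_eq_fintype_card]

private lemma bddAbove_ml [Fintype V] (G : SimpleGraph V) :
    BddAbove {n | ∃ T : SimpleGraph V, T ≤ G ∧ T.IsTree ∧ n = numLeaves T} := by
  refine ⟨Fintype.card V, ?_⟩
  rintro n ⟨T, -, -, rfl⟩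
  exact numLeaves_le_card T

private lemma acyclic_anti {D T : SimpleGraph V} (h : D ≤ T) (hT : T.IsAcyclic) :
    D.IsAcyclic := by
  intro w c hc
  exact hT (c.transfer T fun e he => edgeSet_mono h (c.edges_subset_edgeSet he))
    (hc.transfer _)

private lemma reach_split_aux {T : SimpleGraph V} {u v : V} :
    ∀ {x z : V}, T.Walk x z →
      ((T.deleteEdges {s(u, v)}).Reachable z u ∨ (T.deleteEdges {s(u, v)}).Reachable z v) →
      ((T.deleteEdges {s(u, v)}).Reachable x u ∨ (T.deleteEdges {s(u, v)}).Reachable x v) := by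
  intro x z p
  induction p with
  | nil => exact id
  | @cons x y _ h q ih =>
    intro hz
    by_cases he : s(x, y) = s(u, v)
    · rw [Sym2.eq_iff] at he
      rcases he with ⟨rfl, rfl⟩ | ⟨rfl, rfl⟩
      · exact Or.inl (Reachable.refl _)
      · exact Or.inr (Reachable.refl _)
    · have hadj : (T.deleteEdges {s(u, v)}).Adj x y :=
        SimpleGraph.deleteEdges_adj.mpr ⟨h, by simpa using he⟩
      rcases ih hz with h1 | h1
      · exact Or.inl (hadj.reachable.trans h1)
      · exact Or.inr (hadj.reachable.trans h1)

private lemma reach_split {T : SimpleGraph V} {u v x : V} (p : T.Walk x u) :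
    (T.deleteEdges {s(u, v)}).Reachable x u ∨ (T.deleteEdges {s(u, v)}).Reachable x v :=
  reach_split_aux p (Or.inl (Reachable.refl _))

private lemma exists_cross {G D : SimpleGraph V} {u : V} :
    ∀ {x y : V}, G.Walk x y → D.Reachable u x → ¬ D.Reachable u y →
      ∃ a b, G.Adj a b ∧ D.Reachable u a ∧ ¬ D.Reachable u b := by
  intro x y p
  induction p with
  | nil => exact fun hx hy => absurd hx hy
  | @cons x z _ h q ih =>
    intro hx hy
    by_cases hz : D.Reachable u z
    · exact ih hz hy
    · exact ⟨x, z, h, hx, hz⟩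

private lemma acyclic_sup {D : SimpleGraph V} {a b : V} (hD : D.IsAcyclic)
    (hab : a ≠ b) (hr : ¬ D.Reachable a b) :
    (D ⊔ SimpleGraph.fromEdgeSet {s(a, b)}).IsAcyclic := by
  have hDadj : ¬ D.Adj a b := fun h => hr h.reachable
  have hdel : (D ⊔ SimpleGraph.fromEdgeSet {s(a, b)}).deleteEdges {s(a, b)} = D := by
    ext x y
    simp only [SimpleGraph.deleteEdges_adj, sup_adj, fromEdgeSet_adj,
      Set.mem_singleton_iff]
    constructor
    · rintro ⟨h | ⟨he, _⟩, hne2⟩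
      · exact h
      · exact absurd he hne2
    · intro h
      refine ⟨Or.inl h, fun he => ?_⟩
      rw [Sym2.eq_iff] at he
      rcases he with ⟨rfl, rfl⟩ | ⟨rfl, rfl⟩
      · exact hDadj h
      · exact hDadj h.symm
  have hbridge : (D ⊔ SimpleGraph.fromEdgeSet {s(a, b)}).IsBridge s(a, b) := by
    rw [isBridge_iff]
    show ¬ ((D ⊔ SimpleGraph.fromEdgeSet {s(a, b)}).deleteEdges {s(a, b)}).Reachable a b
    rw [hdel]
    exact hr
  intro w c hc
  have hno : s(a, b) ∉ c.edges :=
    hbridge.notMem_edges_of_isCycle hc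
  have hsub : ∀ e ∈ c.edges, e ∈ D.edgeSet := by
    intro e he
    have h1 := c.edges_subset_edgeSet he
    rw [edgeSet_sup, edgeSet_fromEdgeSet] at h1
    rcases h1 with h1 | h1
    · exact h1
    · exact absurd he (h1.1 ▸ hno)
  exact hD (c.transfer D hsub) (hc.transfer hsub)

private lemma exists_adj_of_connected {H : SimpleGraph V} (hH : H.Connected)
    {w x : V} (hx : x ≠ w) : ∃ z, H.Adj w z := by
  obtain ⟨p⟩ := hH w x
  cases p with
  | nil => exact absurd rfl hx
  | cons h q => exact ⟨_, h⟩

/-- Adding a single edge between two distinct non-adjacent vertices of a finite connected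
graph with at least two vertices increases the max-leaf number by at most 2. -/
theorem ml_addEdge_le [Fintype V] [DecidableEq V] (G : SimpleGraph V) (hG : G.Connected)
    (h2 : 1 < Fintype.card V) (u v : V) (huv : u ≠ v) (hadj : ¬ G.Adj u v) :
    ml (G ⊔ SimpleGraph.fromEdgeSet {s(u, v)}) ≤ ml G + 2 := by
  classical
  apply csSup_le'
  rintro n ⟨T, hTle, hTtree, rfl⟩
  by_cases hTuv : T.Adj u v
  swap
  · -- T avoids the new edge, so T ≤ G.
    have hTG : T ≤ G := by
      intro x y hxy
      rcases hTle hxy with h | h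
      · exact h
      · exfalso
        rcases Sym2.eq_iff.mp (Set.mem_singleton_iff.mp h.1) with ⟨rfl, rfl⟩ | ⟨rfl, rfl⟩
        · exact hTuv hxy
        · exact hTuv hxy.symm
    have h1 : numLeaves T ≤ ml G := le_csSup (bddAbove_ml G) ⟨T, hTG, hTtree, rfl⟩
    omega
  · -- T uses the new edge.
    set D := T.deleteEdges {s(u, v)} with hD
    have hDT : D ≤ T := fun x y h => (SimpleGraph.deleteEdges_adj.mp h).1
    have hDG : D ≤ G := by
      intro x y h
      rw [hD, SimpleGraph.deleteEdges_adj] at h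
      rcases hTle h.1 with hg | hg
      · exact hg
      · exact absurd hg.1 h.2
    -- the deleted edge was a bridge of T
    have hbr : T.IsBridge s(u, v) :=
      isAcyclic_iff_forall_adj_isBridge.mp hTtree.IsAcyclic hTuv
    have hruv : ¬ D.Reachable u v := (isBridge_iff.mp hbr)
    -- every vertex reaches u or v within D
    have hsplit : ∀ x, D.Reachable x u ∨ D.Reachable x v := fun x =>
      reach_split (hTtree.isConnected x u).some
    -- find a crossing edge of G
    obtain ⟨a, b, hab, ha, hb⟩ :=
      exists_cross (hG u v).some (Reachable.refl u) hruv
    have hne : a ≠ b := by rintro rfl; exact hb ha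
    have hnr : ¬ D.Reachable a b := fun h => hb (ha.trans h)
    set T' := D ⊔ SimpleGraph.fromEdgeSet {s(a, b)} with hT'
    have hDT' : D ≤ T' := le_sup_left
    have hT'G : T' ≤ G := by
      refine sup_le hDG ?_
      intro x y h
      rcases Sym2.eq_iff.mp (Set.mem_singleton_iff.mp h.1) with ⟨rfl, rfl⟩ | ⟨rfl, rfl⟩
      · exact hab
      · exact hab.symm
    have hT'ab : T'.Adj a b := (sup_adj _ _ _ _).mpr (Or.inr ⟨rfl, hne⟩)
    -- reaching u in T'
    have hbv : D.Reachable b v := by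
      rcases hsplit b with h | h
      · exact absurd h.symm hb
      · exact h
    have hvu : T'.Reachable v u := by
      have h1 : T'.Reachable v b := (hbv.mono hDT').symm
      have h2 : T'.Reachable b a := hT'ab.symm.reachable
      have h3 : T'.Reachable a u := ((ha.mono hDT')).symm
      exact (h1.trans h2).trans h3
    have hreach : ∀ x, T'.Reachable x u := by
      intro x
      rcases hsplit x with h | h
      · exact h.mono hDT'
      · exact (h.mono hDT').trans hvu
    have hT'conn : T'.Connected := by
      have : Nonempty V := Fintype.card_pos_iff.mp (by omega)
      exact Connected.mk fun x y => (hreach x).trans (hreach y).symm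
    have hT'tree : T'.IsTree :=
      ⟨hT'conn, acyclic_sup (acyclic_anti hDT hTtree.IsAcyclic) hne hnr⟩
    have h1 : numLeaves T' ≤ ml G := le_csSup (bddAbove_ml G) ⟨T', hT'G, hT'tree, rfl⟩
    -- leaf counting: every leaf of T other than a, b is a leaf of T'
    have hsubset : {w | (T.neighborSet w).ncard = 1} ⊆
        {w | (T'.neighborSet w).ncard = 1} ∪ {a, b} := by
      intro w hw
      by_cases hwab : w = a ∨ w = b
      · exact Or.inr hwab
      push_neg at hwab
      left
      -- T' neighbors of w are T neighbors of w
      have hsub : T'.neighborSet w ⊆ T.neighborSet w := by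
        intro z hz
        rcases hz with h | h
        · exact hDT h
        · exfalso
          rcases Sym2.eq_iff.mp (Set.mem_singleton_iff.mp h.1) with ⟨rfl, rfl⟩ | ⟨rfl, rfl⟩
          · exact hwab.1 rfl
          · exact hwab.2 rfl
      have hnonempty : (T'.neighborSet w).Nonempty := by
        obtain ⟨x, hx⟩ := Fintype.exists_ne_of_one_lt_card h2 w
        obtain ⟨z, hz⟩ := exists_adj_of_connected hT'conn hx
        exact ⟨z, hz⟩
      have hle : (T'.neighborSet w).ncard ≤ (T.neighborSet w).ncard :=
        Set.ncard_le_ncard hsub (Set.toFinite _)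
      have hge : 1 ≤ (T'.neighborSet w).ncard :=
        (Set.ncard_pos (Set.toFinite _)).mpr hnonempty
      have := hw
      simp only [Set.mem_setOf_eq] at this ⊢
      omega
    have h2' : numLeaves T ≤ numLeaves T' + 2 := by
      unfold numLeaves
      calc {w | (T.neighborSet w).ncard = 1}.ncard
          ≤ ({w | (T'.neighborSet w).ncard = 1} ∪ {a, b}).ncard :=
            Set.ncard_le_ncard hsubset (Set.toFinite _)
        _ ≤ {w | (T'.neighborSet w).ncard = 1}.ncard + ({a, b} : Set V).ncard :=
            Set.ncard_union_le _ _
        _ ≤ {w | (T'.neighborSet w).ncard = 1}.ncard + 2 := by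
            have : ({a, b} : Set V).ncard ≤ 2 := by
              apply le_trans (Set.ncard_insert_le _ _)
              simp [Set.ncard_singleton]
            omega
    omega
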